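/- Let X ∈ ℝ^{m×n} be a real matrix with rank(X) = r. Then there exist matrices U ∈ ℝ^{m×r} and V ∈ ℝ^{n×r} with X = UVᵀ such that ‖U‖_* ‖V‖_F = (Σ_i σ_i(X)^{2/3})^{3/2}, i.e., the Schatten-2/3 quasi-norm of X is attained by some factorization. -/

import Mathlib

open Matrix

/-- The singular values of a real matrix `X`, i.e. the nonnegative square roots of the
eigenvalues of `Xᵀ * X` (zero-padded to `n` values; zero singular values contribute `0`
to all the sums below, so this is harmless). -/
noncomputable def singularValues {m n : ℕ} (X : Matrix (Fin m) (Fin n) ℝ) : Fin n → ℝ :=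
  fun i => Real.sqrt (((by simpa [Matrix.conjTranspose_eq_transpose_of_trivial] using
    Matrix.isHermitian_conjTranspose_mul_self X) : (Xᵀ * X).IsHermitian).eigenvalues i)

/-- The nuclear norm `‖X‖_* = Σ_i σ_i(X)`. -/
noncomputable def nuclearNorm {m n : ℕ} (X : Matrix (Fin m) (Fin n) ℝ) : ℝ :=
  ∑ i, singularValues X i

/-- The Frobenius norm `‖X‖_F = (Σ_{i,j} X_{ij}²)^{1/2}`. -/
noncomputable def frobNorm {m n : ℕ} (X : Matrix (Fin m) (Fin n) ℝ) : ℝ :=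
  Real.sqrt (∑ i, ∑ j, (X i j) ^ 2)

section SchattenAux

open Polynomial


lemma charpoly_conj_aux {k : ℕ} (P Q B : Matrix (Fin k) (Fin k) ℝ)
    (h1 : P * Q = 1) : (P * B * Q).charpoly = B.charpoly := by
  have hmap : ∀ M N : Matrix (Fin k) (Fin k) ℝ,
      (C : ℝ →+* ℝ[X]).mapMatrix (M * N) =
        (C : ℝ →+* ℝ[X]).mapMatrix M * (C : ℝ →+* ℝ[X]).mapMatrix N :=
    fun M N => map_mul _ M N
  set Pm := (C : ℝ →+* ℝ[X]).mapMatrix P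
  set Qm := (C : ℝ →+* ℝ[X]).mapMatrix Q
  have hPQ : Pm * Qm = 1 := by rw [← hmap, h1]; exact map_one _
  have hscal : ∀ M : Matrix (Fin k) (Fin k) ℝ[X],
      M * Matrix.scalar (Fin k) (X : ℝ[X]) = Matrix.scalar (Fin k) (X : ℝ[X]) * M :=
    fun M => (Matrix.scalar_commute (X : ℝ[X]) (fun r' => Commute.all _ _) M).symm
  have hch : charmatrix (P * B * Q) = Pm * charmatrix B * Qm := by
    rw [charmatrix, charmatrix, hmap, hmap, mul_sub, sub_mul]
    congr 1
    rw [hscal, mul_assoc, hPQ, mul_one]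
  rw [Matrix.charpoly, Matrix.charpoly, hch, det_mul, det_mul]
  have hdet : Pm.det * Qm.det = 1 := by
    rw [← det_mul, hPQ, det_one]
  ring_nf
  calc Pm.det * (charmatrix B).det * Qm.det
      = (charmatrix B).det * (Pm.det * Qm.det) := by ring
    _ = (charmatrix B).det := by rw [hdet, mul_one]

lemma charpoly_diagonal_aux {k : ℕ} (d : Fin k → ℝ) :
    (Matrix.diagonal d).charpoly =
      ((Finset.univ.val.map d).map fun a => (X : ℝ[X]) - C a).prod := by
  rw [Matrix.charpoly_of_upperTriangular _ (Matrix.blockTriangular_diagonal d)]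
  rw [Finset.prod_eq_multiset_prod, Multiset.map_map]
  congr 1
  ext i
  simp

lemma multiset_eigs_diagonal {k : ℕ} (d : Fin k → ℝ) (h : (Matrix.diagonal d).IsHermitian) :
    Finset.univ.val.map h.eigenvalues = Finset.univ.val.map d := by
  have hof : (RCLike.ofReal ∘ h.eigenvalues : Fin k → ℝ) = h.eigenvalues := rfl
  have hU1 : (h.eigenvectorUnitary : Matrix (Fin k) (Fin k) ℝ) *
      star (h.eigenvectorUnitary : Matrix (Fin k) (Fin k) ℝ) = 1 :=
    Matrix.mem_unitaryGroup_iff.mp h.eigenvectorUnitary.2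
  have hch : (Matrix.diagonal d).charpoly = (Matrix.diagonal h.eigenvalues).charpoly := by
    conv_lhs => rw [h.spectral_theorem, hof]
    exact charpoly_conj_aux _ _ _ hU1
  rw [charpoly_diagonal_aux, charpoly_diagonal_aux] at hch
  have := congrArg Polynomial.roots hch
  rw [Polynomial.roots_multiset_prod_X_sub_C, Polynomial.roots_multiset_prod_X_sub_C] at this
  exact this.symm

lemma sum_f_eigs_diagonal {k : ℕ} {A : Matrix (Fin k) (Fin k) ℝ} (hA : A.IsHermitian)
    (d : Fin k → ℝ) (hAd : A = Matrix.diagonal d) (f : ℝ → ℝ) :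
    ∑ i, f (hA.eigenvalues i) = ∑ i, f (d i) := by
  subst hAd
  have h := congrArg (fun s => (Multiset.map f s).sum) (multiset_eigs_diagonal d hA)
  simpa [Finset.sum_eq_multiset_sum, Multiset.map_map, Function.comp_def] using h

end SchattenAux

/-- For `X` of rank `r`, there is a factorization `X = U Vᵀ` with
`U : m×r`, `V : n×r` attaining `‖U‖_* ‖V‖_F = (Σ_i σ_i(X)^(2/3))^(3/2)`. -/
theorem schatten_two_thirds_attained {m n r : ℕ} (X : Matrix (Fin m) (Fin n) ℝ)
    (hrank : X.rank = r) :
    ∃ (U : Matrix (Fin m) (Fin r) ℝ) (V : Matrix (Fin n) (Fin r) ℝ),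
      X = U * Vᵀ ∧
      nuclearNorm U * frobNorm V =
        (∑ i, singularValues X i ^ ((2 : ℝ) / 3)) ^ ((3 : ℝ) / 2) := by
  classical
  set hH := Matrix.isHermitian_conjTranspose_mul_self X with hHdef
  set μ : Fin n → ℝ := hH.eigenvalues with hμdef
  have hμ0 : ∀ i, 0 ≤ μ i := fun i => Matrix.eigenvalues_conjTranspose_mul_self_nonneg X i
  set w : Fin n → (Fin n → ℝ) := fun i => ⇑(hH.eigenvectorBasis i) with hwdef
  set W : Matrix (Fin n) (Fin n) ℝ := (hH.eigenvectorUnitary : Matrix (Fin n) (Fin n) ℝ)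
    with hWdef
  have hWapp : ∀ b i, W b i = w i b := fun b i => rfl
  have heig : ∀ i, (Xᴴ * X) *ᵥ w i = μ i • w i := fun i => hH.mulVec_eigenvectorBasis i
  have hWW : W * star W = 1 := Matrix.mem_unitaryGroup_iff.mp hH.eigenvectorUnitary.2
  have hWW' : star W * W = 1 := Matrix.mem_unitaryGroup_iff'.mp hH.eigenvectorUnitary.2
  have horth : ∀ i i', w i ⬝ᵥ w i' = if i = i' then 1 else 0 := by
    intro i i'
    have h1 := congrFun (congrFun hWW' i) i'
    rw [Matrix.mul_apply, Matrix.one_apply] at h1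
    rw [← h1, dotProduct]
    exact Finset.sum_congr rfl fun b _ => by
      rw [Matrix.star_apply, star_trivial, hWapp, hWapp]
  have hXc : Xᴴ = Xᵀ := by
    ext a b; rw [Matrix.conjTranspose_apply, Matrix.transpose_apply, star_trivial]
  have hdotXX : ∀ i i', (X *ᵥ w i) ⬝ᵥ (X *ᵥ w i') = μ i' * (if i = i' then 1 else 0) := by
    intro i i'
    have h4 : w i ⬝ᵥ ((Xᴴ * X) *ᵥ w i') = (X *ᵥ w i) ⬝ᵥ (X *ᵥ w i') := by
      rw [hXc, ← Matrix.mulVec_mulVec, Matrix.dotProduct_mulVec, Matrix.vecMul_transpose]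
    rw [← h4, heig, dotProduct_smul, horth, smul_eq_mul]
  have hX0 : ∀ i, μ i = 0 → X *ᵥ w i = 0 := by
    intro i h0
    have h1 := hdotXX i i
    rw [h0, zero_mul] at h1
    exact dotProduct_self_eq_zero.mp h1
  have hXsum : ∀ a b, X a b = ∑ i, (X *ᵥ w i) a * w i b := by
    intro a b
    have h1 : X a b = (X * W * star W) a b := by
      rw [Matrix.mul_assoc, hWW, Matrix.mul_one]
    rw [h1, Matrix.mul_apply]
    refine Finset.sum_congr rfl fun i _ => ?_
    rw [Matrix.mul_apply, Matrix.star_apply, star_trivial, hWapp]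
    congr 1
  have hcard : Fintype.card {i // μ i ≠ 0} = r := by
    rw [← hH.rank_eq_card_non_zero_eigs, Matrix.rank_conjTranspose_mul_self, hrank]
  set e : Fin r ≃ {i // μ i ≠ 0} := (Fintype.equivFinOfCardEq hcard).symm with hedef
  set c : Fin r → ℝ := fun j => Real.sqrt (μ (e j)) with hcdef
  have hc : ∀ j, 0 < c j := fun j =>
    Real.sqrt_pos.mpr (lt_of_le_of_ne (hμ0 _) (Ne.symm (e j).prop))
  have hμc : ∀ j, μ (e j) = c j ^ (2 : ℕ) := fun j => (Real.sq_sqrt (hμ0 _)).symm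
  have hsum : ∀ g : Fin n → ℝ, (∀ i, μ i = 0 → g i = 0) → ∑ j, g (e j) = ∑ i, g i := by
    intro g hg
    rw [Equiv.sum_comp e (fun i => g i.1)]
    rw [← Finset.sum_subtype (Finset.univ.filter (fun i => μ i ≠ 0))
      (fun x => by simp) (fun i => g i)]
    exact Finset.sum_filter_of_ne fun i _ hgi => fun h0 => hgi (hg i h0)
  set U : Matrix (Fin m) (Fin r) ℝ := fun a j => c j ^ (-(1:ℝ)/3) * (X *ᵥ w (e j)) a with hUdef
  set V : Matrix (Fin n) (Fin r) ℝ := fun b j => c j ^ ((1:ℝ)/3) * w (e j) b with hVdef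
  refine ⟨U, V, ?_, ?_⟩
  · ext a b
    rw [Matrix.mul_apply]
    refine Eq.symm ?_
    have h2 : ∀ j, U a j * Vᵀ j b = (X *ᵥ w (e j)) a * w (e j) b := by
      intro j
      have h3 : c j ^ (-(1:ℝ)/3) * c j ^ ((1:ℝ)/3) = 1 := by
        rw [← Real.rpow_add (hc j)]; norm_num
      calc U a j * Vᵀ j b
          = (c j ^ (-(1:ℝ)/3) * c j ^ ((1:ℝ)/3)) * ((X *ᵥ w (e j)) a * w (e j) b) := by
            rw [Matrix.transpose_apply, hUdef, hVdef]; dsimp only; ring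
        _ = (X *ᵥ w (e j)) a * w (e j) b := by rw [h3, one_mul]
    calc ∑ j, U a j * Vᵀ j b
        = ∑ j, (X *ᵥ w (e j)) a * w (e j) b := Finset.sum_congr rfl fun j _ => h2 j
      _ = ∑ i, (X *ᵥ w i) a * w i b :=
          hsum (fun i => (X *ᵥ w i) a * w i b)
            (fun i h0 => by show (X *ᵥ w i) a * w i b = 0; rw [hX0 i h0]; simp)
      _ = X a b := (hXsum a b).symm
  · have hUtU : Uᴴ * U = Matrix.diagonal (fun j => c j ^ ((4:ℝ)/3)) := by
      ext j k
      rw [Matrix.mul_apply]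
      have h5 : ∀ a, Uᴴ j a * U a k =
          (c j ^ (-(1:ℝ)/3) * c k ^ (-(1:ℝ)/3)) *
            ((X *ᵥ w (e j)) a * (X *ᵥ w (e k)) a) := by
        intro a
        simp only [Matrix.conjTranspose_apply, star_trivial]; simp only [hUdef]
        ring
      rw [Finset.sum_congr rfl fun a _ => h5 a, ← Finset.mul_sum]
      have h6 : (∑ a, (X *ᵥ w (e j)) a * (X *ᵥ w (e k)) a) =
          μ (e k) * (if ((e j : Fin n)) = ((e k : Fin n)) then 1 else 0) := hdotXX _ _
      rw [h6]
      by_cases hjk : j = k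
      · subst hjk
        rw [if_pos rfl, mul_one, Matrix.diagonal_apply_eq, hμc j]
        rw [← Real.rpow_natCast (c j) 2, ← Real.rpow_add (hc j), ← Real.rpow_add (hc j)]
        norm_num
      · rw [if_neg (fun h => hjk (e.injective (Subtype.coe_injective h))),
          Matrix.diagonal_apply_ne _ hjk, mul_zero, mul_zero]
    have hnuc : nuclearNorm U = ∑ j, c j ^ ((2:ℝ)/3) := by
      show (∑ i, Real.sqrt ((Matrix.isHermitian_conjTranspose_mul_self U).eigenvalues i)) = _
      refine (sum_f_eigs_diagonal (Matrix.isHermitian_conjTranspose_mul_self U) _ hUtU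
        Real.sqrt).trans ?_
      refine Finset.sum_congr rfl fun j _ => ?_
      rw [Real.sqrt_eq_rpow, ← Real.rpow_mul (hc j).le]
      norm_num
    have hfrob : frobNorm V = Real.sqrt (∑ j, c j ^ ((2:ℝ)/3)) := by
      unfold frobNorm
      congr 1
      rw [Finset.sum_comm]
      refine Finset.sum_congr rfl fun j _ => ?_
      have hcc : (c j ^ ((1:ℝ)/3))^(2:ℕ) = c j ^ ((2:ℝ)/3) := by
        rw [← Real.rpow_natCast (c j ^ ((1:ℝ)/3)) 2, ← Real.rpow_mul (hc j).le]
        norm_num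
      have h7 : ∀ b, (V b j)^2 = c j ^ ((2:ℝ)/3) * (w (e j) b * w (e j) b) := by
        intro b
        simp only [hVdef]
        rw [mul_pow, hcc, pow_two]
      rw [Finset.sum_congr rfl fun b _ => h7 b, ← Finset.mul_sum]
      have h8 : (∑ b, w (e j) b * w (e j) b) = 1 := by
        have := horth (e j) (e j)
        rw [if_pos rfl] at this
        exact this
      rw [h8, mul_one]
    have hrhs : (∑ i, singularValues X i ^ ((2:ℝ)/3)) = ∑ j, c j ^ ((2:ℝ)/3) := by
      refine Eq.trans ?_ (Eq.trans (hsum (fun i => Real.sqrt (μ i) ^ ((2:ℝ)/3)) ?_).symm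
        (Finset.sum_congr rfl fun j _ => rfl))
      · exact Finset.sum_congr rfl fun i _ => rfl
      · intro i h0
        show Real.sqrt (μ i) ^ ((2:ℝ)/3) = 0
        rw [h0, Real.sqrt_zero, Real.zero_rpow (by norm_num)]
    have hT0 : 0 ≤ ∑ j, c j ^ ((2:ℝ)/3) :=
      Finset.sum_nonneg fun j _ => Real.rpow_nonneg (hc j).le _
    rw [hnuc, hfrob, hrhs]
    set T := ∑ j, c j ^ ((2:ℝ)/3) with hTdef
    rw [show ((3:ℝ)/2) = (1/2:ℝ) * 3 by norm_num, Real.rpow_mul hT0, ← Real.sqrt_eq_rpow]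
    rw [show ((3:ℝ)) = ((3:ℕ):ℝ) by norm_num, Real.rpow_natCast]
    rw [show (Real.sqrt T)^(3:ℕ) = (Real.sqrt T * Real.sqrt T) * Real.sqrt T by ring,
      Real.mul_self_sqrt hT0]
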